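/- In the short-string limit ω → ∞ one has E(ω) → 0, S(ω) → 0, and the leading Regge trajectory relation holds: lim_{ω → ∞} E(ω)² / S(ω) = 2√λ. -/

import Mathlib

noncomputable section

open Real

/-- Complete elliptic integral of the first kind,
K(m) = ∫₀^{π/2} (1 − m sin²θ)^{−1/2} dθ. -/
def ellK (m : ℝ) : ℝ := ∫ θ in (0:ℝ)..(π / 2), (Real.sqrt (1 - m * Real.sin θ ^ 2))⁻¹

/-- Complete elliptic integral of the second kind,
E(m) = ∫₀^{π/2} (1 − m sin²θ)^{1/2} dθ. -/
def ellE (m : ℝ) : ℝ := ∫ θ in (0:ℝ)..(π / 2), Real.sqrt (1 - m * Real.sin θ ^ 2)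


/-- The GKP energy E(ω) = (2√λ/π)·(ω/(ω²−1))·E(1/ω²), with √λ = L². -/
def gkpE (L ω : ℝ) : ℝ := (2 * L ^ 2 / π) * (ω / (ω ^ 2 - 1)) * ellE (1 / ω ^ 2)

/-- The GKP spin S(ω) = (2√λ/π)·((ω²/(ω²−1))·E(1/ω²) − K(1/ω²)), with √λ = L². -/
def gkpS (L ω : ℝ) : ℝ :=
  (2 * L ^ 2 / π) * ((ω ^ 2 / (ω ^ 2 - 1)) * ellE (1 / ω ^ 2) - ellK (1 / ω ^ 2))

open Filter Topology

def ellJ (m : ℝ) : ℝ :=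
  ∫ θ in (0:ℝ)..(π / 2), Real.cos θ ^ 2 * (Real.sqrt (1 - m * Real.sin θ ^ 2))⁻¹


variable {m : ℝ}

lemma upos (hm0 : 0 ≤ m) (hm1 : m < 1) (θ : ℝ) : 0 < 1 - m * Real.sin θ ^ 2 := by
  nlinarith [Real.sin_sq_le_one θ, sq_nonneg (Real.sin θ)]

lemma contE : Continuous fun θ : ℝ => Real.sqrt (1 - m * Real.sin θ ^ 2) :=
  (continuous_const.sub (continuous_const.mul (Real.continuous_sin.pow 2))).sqrt

lemma contK (hm0 : 0 ≤ m) (hm1 : m < 1) :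
    Continuous fun θ : ℝ => (Real.sqrt (1 - m * Real.sin θ ^ 2))⁻¹ :=
  contE.inv₀ fun θ => (Real.sqrt_pos.mpr (upos hm0 hm1 θ)).ne'

lemma contJ (hm0 : 0 ≤ m) (hm1 : m < 1) :
    Continuous fun θ : ℝ => Real.cos θ ^ 2 * (Real.sqrt (1 - m * Real.sin θ ^ 2))⁻¹ :=
  (Real.continuous_cos.pow 2).mul (contK hm0 hm1)

lemma sqrt_ub (hm0 : 0 ≤ m) (θ : ℝ) : Real.sqrt (1 - m * Real.sin θ ^ 2) ≤ 1 := by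
  exact Real.sqrt_le_one.mpr (by nlinarith [sq_nonneg (Real.sin θ)])

lemma sqrt_lb (hm0 : 0 ≤ m) (θ : ℝ) :
    Real.sqrt (1 - m) ≤ Real.sqrt (1 - m * Real.sin θ ^ 2) :=
  Real.sqrt_le_sqrt (by nlinarith [Real.sin_sq_le_one θ])

lemma ellE_le (hm0 : 0 ≤ m) (hm1 : m < 1) : ellE m ≤ π / 2 := by
  have h := intervalIntegral.integral_mono_on (μ := MeasureTheory.volume) (by positivity : (0:ℝ) ≤ π/2)
    (contE.intervalIntegrable 0 (π/2)) (continuous_const.intervalIntegrable 0 (π/2))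
    (fun θ _ => sqrt_ub hm0 θ)
  simpa [ellE] using h

lemma le_ellE (hm0 : 0 ≤ m) (hm1 : m < 1) : Real.sqrt (1 - m) * (π / 2) ≤ ellE m := by
  have h := intervalIntegral.integral_mono_on (μ := MeasureTheory.volume) (by positivity : (0:ℝ) ≤ π/2)
    (continuous_const.intervalIntegrable 0 (π/2)) (contE.intervalIntegrable 0 (π/2))
    (fun θ _ => sqrt_lb hm0 θ)
  simpa [ellE, mul_comm] using h

lemma le_ellK (hm0 : 0 ≤ m) (hm1 : m < 1) : π / 2 ≤ ellK m := by
  have h := intervalIntegral.integral_mono_on (μ := MeasureTheory.volume) (by positivity : (0:ℝ) ≤ π/2)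
    (continuous_const.intervalIntegrable 0 (π/2)) ((contK hm0 hm1).intervalIntegrable 0 (π/2))
    (fun θ _ => (one_le_inv₀ (Real.sqrt_pos.mpr (upos hm0 hm1 θ))).mpr (sqrt_ub hm0 θ))
  simpa [ellK] using h

lemma ellK_le (hm0 : 0 ≤ m) (hm1 : m < 1) : ellK m ≤ (π / 2) * (Real.sqrt (1 - m))⁻¹ := by
  have hpos : 0 < Real.sqrt (1 - m) := Real.sqrt_pos.mpr (by linarith)
  have h := intervalIntegral.integral_mono_on (μ := MeasureTheory.volume) (by positivity : (0:ℝ) ≤ π/2)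
    ((contK hm0 hm1).intervalIntegrable 0 (π/2)) (continuous_const.intervalIntegrable 0 (π/2))
    (fun θ _ => inv_anti₀ hpos (sqrt_lb hm0 θ))
  simpa [ellK, mul_comm] using h

lemma cos_sq_int : ∫ θ in (0:ℝ)..(π/2), Real.cos θ ^ 2 = π / 4 := by
  rw [integral_cos_sq]; simp; ring

lemma le_ellJ (hm0 : 0 ≤ m) (hm1 : m < 1) : π / 4 ≤ ellJ m := by
  have h := intervalIntegral.integral_mono_on (μ := MeasureTheory.volume)
    (f := fun θ => Real.cos θ ^ 2) (by positivity : (0:ℝ) ≤ π/2)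
    ((Real.continuous_cos.pow 2).intervalIntegrable 0 (π/2))
    ((contJ hm0 hm1).intervalIntegrable 0 (π/2))
    (fun θ _ => by
      have h1 : (1:ℝ) ≤ (Real.sqrt (1 - m * Real.sin θ ^ 2))⁻¹ :=
        (one_le_inv₀ (Real.sqrt_pos.mpr (upos hm0 hm1 θ))).mpr (sqrt_ub hm0 θ)
      nlinarith [sq_nonneg (Real.cos θ)])
  rw [cos_sq_int] at h
  exact h

lemma ellJ_le (hm0 : 0 ≤ m) (hm1 : m < 1) : ellJ m ≤ (π / 4) * (Real.sqrt (1 - m))⁻¹ := by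
  have hpos : 0 < Real.sqrt (1 - m) := Real.sqrt_pos.mpr (by linarith)
  have h := intervalIntegral.integral_mono_on (μ := MeasureTheory.volume)
    (g := fun θ => Real.cos θ ^ 2 * (Real.sqrt (1 - m))⁻¹) (by positivity : (0:ℝ) ≤ π/2)
    ((contJ hm0 hm1).intervalIntegrable 0 (π/2))
    (((Real.continuous_cos.pow 2).mul continuous_const).intervalIntegrable 0 (π/2))
    (fun θ _ => mul_le_mul_of_nonneg_left (inv_anti₀ hpos (sqrt_lb hm0 θ)) (sq_nonneg _))
  have h2 : ∫ θ in (0:ℝ)..(π/2), Real.cos θ ^ 2 * (Real.sqrt (1-m))⁻¹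
      = (π/4) * (Real.sqrt (1-m))⁻¹ := by
    rw [intervalIntegral.integral_mul_const, cos_sq_int]
  rw [h2] at h
  exact h

lemma ident (hm0 : 0 ≤ m) (hm1 : m < 1) :
    ellE m / (1 - m) - ellK m = (m / (1 - m)) * ellJ m := by
  have h1m : (1:ℝ) - m ≠ 0 := by linarith
  have hE : ellE m / (1 - m) = ∫ θ in (0:ℝ)..(π/2),
      Real.sqrt (1 - m * Real.sin θ ^ 2) / (1 - m) := by
    rw [ellE, intervalIntegral.integral_div]
  have hJ : (m / (1 - m)) * ellJ m = ∫ θ in (0:ℝ)..(π/2),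
      (m / (1 - m)) * (Real.cos θ ^ 2 * (Real.sqrt (1 - m * Real.sin θ ^ 2))⁻¹) := by
    rw [ellJ, intervalIntegral.integral_const_mul]
  rw [hE, ellK, hJ, ← intervalIntegral.integral_sub
    ((contE.div_const _).intervalIntegrable 0 (π/2))
    ((contK hm0 hm1).intervalIntegrable 0 (π/2))]
  apply intervalIntegral.integral_congr
  intro θ _
  have hu : 0 < 1 - m * Real.sin θ ^ 2 := upos hm0 hm1 θ
  have hs : Real.sqrt (1 - m * Real.sin θ ^ 2) ≠ 0 := (Real.sqrt_pos.mpr hu).ne'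
  have hsq : Real.sqrt (1 - m * Real.sin θ ^ 2) * Real.sqrt (1 - m * Real.sin θ ^ 2)
      = 1 - m * Real.sin θ ^ 2 := Real.mul_self_sqrt hu.le
  have hc : Real.cos θ ^ 2 = 1 - Real.sin θ ^ 2 := by
    nlinarith [Real.sin_sq_add_cos_sq θ]
  field_simp
  nlinarith [hsq, hc]



section main
variable {L ω : ℝ}

lemma hyps (hω : 2 ≤ ω) : 0 < ω ∧ 0 < ω^2 - 1 ∧ 0 ≤ 1/ω^2 ∧ 1/ω^2 < 1 ∧ 1/ω^2 ≤ 1/4 := by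
  have h0 : 0 < ω := by linarith
  refine ⟨h0, by nlinarith, by positivity, ?_, ?_⟩
  · rw [div_lt_one (by positivity)]; nlinarith
  · rw [div_le_div_iff₀ (by positivity) (by norm_num)]; nlinarith

lemma gkpE_lb (hL : 0 < L) (hω : 2 ≤ ω) :
    (2*L^2/π) * (ω/(ω^2-1)) * (Real.sqrt (1 - 1/ω^2) * (π/2)) ≤ gkpE L ω := by
  obtain ⟨h0, h1, hm0, hm1, -⟩ := hyps hω
  exact mul_le_mul_of_nonneg_left (le_ellE hm0 hm1) (by positivity)

lemma gkpE_ub (hL : 0 < L) (hω : 2 ≤ ω) :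
    gkpE L ω ≤ (2*L^2/π) * (ω/(ω^2-1)) * (π/2) := by
  obtain ⟨h0, h1, hm0, hm1, -⟩ := hyps hω
  exact mul_le_mul_of_nonneg_left (ellE_le hm0 hm1) (by positivity)

lemma gkpE_nonneg (hL : 0 < L) (hω : 2 ≤ ω) : 0 ≤ gkpE L ω := by
  refine le_trans ?_ (gkpE_lb hL hω)
  obtain ⟨h0, h1, -, -, -⟩ := hyps hω
  have := pi_pos
  positivity

lemma gkpS_eq (hL : 0 < L) (hω : 2 ≤ ω) :
    gkpS L ω = (2*L^2/π) * ((1/ω^2 / (1 - 1/ω^2)) * ellJ (1/ω^2)) := by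
  obtain ⟨h0, h1, hm0, hm1, -⟩ := hyps hω
  rw [gkpS, ← ident hm0 hm1]
  congr 2
  have hω2 : (ω:ℝ)^2 ≠ 0 := by positivity
  have h : ω^2/(ω^2-1) = (1 - 1/ω^2)⁻¹ := by field_simp
  rw [h, ← div_eq_inv_mul]

lemma gkpS_lb (hL : 0 < L) (hω : 2 ≤ ω) :
    (2*L^2/π) * ((1/ω^2 / (1 - 1/ω^2)) * (π/4)) ≤ gkpS L ω := by
  obtain ⟨h0, h1, hm0, hm1, -⟩ := hyps hω
  rw [gkpS_eq hL hω]
  have hm1' : 0 < 1 - 1/ω^2 := by linarith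
  exact mul_le_mul_of_nonneg_left
    (mul_le_mul_of_nonneg_left (le_ellJ hm0 hm1) (by positivity)) (by positivity)

lemma gkpS_ub (hL : 0 < L) (hω : 2 ≤ ω) :
    gkpS L ω ≤ (2*L^2/π) * ((1/ω^2 / (1 - 1/ω^2)) * ((π/4) * (Real.sqrt (1 - 1/ω^2))⁻¹)) := by
  obtain ⟨h0, h1, hm0, hm1, -⟩ := hyps hω
  rw [gkpS_eq hL hω]
  have hm1' : 0 < 1 - 1/ω^2 := by linarith
  exact mul_le_mul_of_nonneg_left
    (mul_le_mul_of_nonneg_left (ellJ_le hm0 hm1) (by positivity)) (by positivity)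

lemma gkpS_pos (hL : 0 < L) (hω : 2 ≤ ω) : 0 < gkpS L ω := by
  refine lt_of_lt_of_le ?_ (gkpS_lb hL hω)
  obtain ⟨h0, h1, -, hm1, -⟩ := hyps hω
  have := pi_pos
  have hm1' : 0 < 1 - 1/ω^2 := by linarith
  have h2 : (0:ℝ) < 1/ω^2 := by positivity
  positivity

end main

/-- In the short-string limit ω → ∞, the energy and spin tend to zero and
the leading Regge trajectory relation E(ω)²/S(ω) → 2√λ holds, with √λ = L². -/
theorem gkp_short_string_regge (L : ℝ) (hL : 0 < L) :
    Tendsto (fun ω => gkpE L ω) atTop (𝓝 0) ∧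
    Tendsto (fun ω => gkpS L ω) atTop (𝓝 0) ∧
    Tendsto (fun ω => (gkpE L ω) ^ 2 / gkpS L ω) atTop (𝓝 (2 * L ^ 2)) := by
  have hπ := pi_pos
  have hinv : Tendsto (fun ω : ℝ => 1/ω^2) atTop (𝓝 0) :=
    Tendsto.div_atTop tendsto_const_nhds (tendsto_pow_atTop two_ne_zero)
  have hone : Tendsto (fun ω : ℝ => 1 - 1/ω^2) atTop (𝓝 1) := by
    simpa using tendsto_const_nhds.sub hinv
  have hbig : Tendsto (fun ω : ℝ => 2*L^2*(2/ω)) atTop (𝓝 0) := by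
    have h : Tendsto (fun ω : ℝ => (2:ℝ)/ω) atTop (𝓝 0) :=
      Tendsto.div_atTop tendsto_const_nhds tendsto_id
    simpa using h.const_mul (2*L^2)
  have p1 : Tendsto (fun ω => gkpE L ω) atTop (𝓝 0) := by
    apply tendsto_of_tendsto_of_tendsto_of_le_of_le' tendsto_const_nhds hbig
    · filter_upwards [eventually_ge_atTop (2:ℝ)] with ω hω using gkpE_nonneg hL hω
    · filter_upwards [eventually_ge_atTop (2:ℝ)] with ω hω
      refine le_trans (gkpE_ub hL hω) ?_
      obtain ⟨h0, h1, -, -, -⟩ := hyps hω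
      have e : (2*L^2/π) * (ω/(ω^2-1)) * (π/2) = L^2 * (ω/(ω^2-1)) := by
        field_simp
      rw [e]
      rw [show 2*L^2*(2/ω) = L^2*(4/ω) by ring]
      have key : ω/(ω^2-1) ≤ 4/ω := by
        rw [div_le_div_iff₀ h1 h0]; nlinarith
      nlinarith [sq_nonneg L]
  have p2 : Tendsto (fun ω => gkpS L ω) atTop (𝓝 0) := by
    apply tendsto_of_tendsto_of_tendsto_of_le_of_le' tendsto_const_nhds hbig
    · filter_upwards [eventually_ge_atTop (2:ℝ)] with ω hω using (gkpS_pos hL hω).le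
    · filter_upwards [eventually_ge_atTop (2:ℝ)] with ω hω
      refine le_trans (gkpS_ub hL hω) ?_
      obtain ⟨h0, h1, hm0, hm1, hm4⟩ := hyps hω
      have hs : (1/2 : ℝ) ≤ Real.sqrt (1 - 1/ω^2) := by
        rw [show (1/2:ℝ) = Real.sqrt (1/4) by
          rw [show (1/4:ℝ) = (1/2)^2 by norm_num, Real.sqrt_sq (by norm_num)]]
        exact Real.sqrt_le_sqrt (by linarith)
      have hsinv : (Real.sqrt (1 - 1/ω^2))⁻¹ ≤ 2 := by
        have := inv_anti₀ (by norm_num : (0:ℝ) < 1/2) hs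
        simpa using this
      have hA : 1/ω^2 / (1 - 1/ω^2) = (ω^2-1)⁻¹ := by
        have hω0 : (ω:ℝ) ≠ 0 := h0.ne'
        field_simp
      rw [hA]
      have step : (2*L^2/π) * ((ω^2-1)⁻¹ * ((π/4) * (Real.sqrt (1 - 1/ω^2))⁻¹))
          ≤ (2*L^2/π) * ((ω^2-1)⁻¹ * ((π/4) * 2)) := by
        have := pi_pos
        gcongr
      refine le_trans step ?_
      have e : (2*L^2/π) * ((ω^2-1)⁻¹ * ((π/4) * 2)) = L^2 / (ω^2-1) := by
        field_simp; ring
      rw [e, show 2*L^2*(2/ω) = (4*L^2)/ω by ring, div_le_div_iff₀ h1 h0]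
      have h4 : (0:ℝ) ≤ 4*ω^2 - ω - 4 := by nlinarith
      nlinarith [mul_nonneg (sq_nonneg L) h4]
  refine ⟨p1, p2, ?_⟩
  have hlo : Tendsto (fun ω : ℝ => (2*L^2/π)*π*Real.sqrt (1 - 1/ω^2)) atTop (𝓝 (2*L^2)) := by
    have hsq : Tendsto (fun ω : ℝ => Real.sqrt (1 - 1/ω^2)) atTop (𝓝 1) := by
      have := (Real.continuous_sqrt.tendsto 1).comp hone
      simpa [Function.comp_def] using this
    have := hsq.const_mul ((2*L^2/π)*π)
    convert this using 2
    field_simp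
  have hhi : Tendsto (fun ω : ℝ => (2*L^2/π)*π/(1 - 1/ω^2)) atTop (𝓝 (2*L^2)) := by
    have := (tendsto_const_nhds (α := ℝ) (x := (2*L^2/π)*π)).div hone one_ne_zero
    convert this using 2
    · rfl
    · rw [div_one, div_mul_cancel₀ _ hπ.ne']
  apply tendsto_of_tendsto_of_tendsto_of_le_of_le' hlo hhi
  · filter_upwards [eventually_ge_atTop (2:ℝ)] with ω hω
    obtain ⟨h0, h1, hm0, hm1, hm4⟩ := hyps hω
    have hSpos := gkpS_pos hL hω
    set c := 2*L^2/π with hc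
    set s := Real.sqrt (1 - 1/ω^2) with hsdef
    have hm1' : 0 < 1 - 1/ω^2 := by linarith
    have hspos : 0 < s := Real.sqrt_pos.mpr hm1'
    have hs2 : s^2 = 1 - 1/ω^2 := Real.sq_sqrt hm1'.le
    rw [le_div_iff₀ hSpos]
    calc c*π*s * gkpS L ω
        ≤ c*π*s * ((2*L^2/π) * ((1/ω^2 / (1 - 1/ω^2)) * ((π/4) * s⁻¹))) := by
          have hcpos : 0 < c := by positivity
          exact mul_le_mul_of_nonneg_left (gkpS_ub hL hω) (by positivity)
      _ = (c * (ω/(ω^2-1)) * (s*(π/2)))^2 := by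
          have hss : s * s⁻¹ = 1 := mul_inv_cancel₀ hspos.ne'
          have e1 : c*π*s * (c * ((1/ω^2 / (1 - 1/ω^2)) * ((π/4) * s⁻¹)))
              = c*π* (c * ((1/ω^2 / (1 - 1/ω^2)) * (π/4))) * (s * s⁻¹) := by ring
          rw [← hc, e1, hss, mul_one]
          have e2 : (c * (ω/(ω^2-1)) * (s*(π/2)))^2
              = (c * (ω/(ω^2-1)) * (π/2))^2 * s^2 := by ring
          rw [e2, hs2]
          have hω0 : (ω:ℝ) ≠ 0 := h0.ne'
          have h1' : ω^2 - 1 ≠ 0 := h1.ne'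
          field_simp
          ring
      _ ≤ (gkpE L ω)^2 := by
          refine pow_le_pow_left₀ (by positivity) (gkpE_lb hL hω) 2
  · filter_upwards [eventually_ge_atTop (2:ℝ)] with ω hω
    obtain ⟨h0, h1, hm0, hm1, hm4⟩ := hyps hω
    have hSpos := gkpS_pos hL hω
    set c := 2*L^2/π with hc
    have hm1' : 0 < 1 - 1/ω^2 := by linarith
    rw [div_le_iff₀ hSpos]
    calc (gkpE L ω)^2
        ≤ (c * (ω/(ω^2-1)) * (π/2))^2 := by
          refine pow_le_pow_left₀ (gkpE_nonneg hL hω) (gkpE_ub hL hω) 2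
      _ = c*π/(1 - 1/ω^2) * ((2*L^2/π) * ((1/ω^2 / (1 - 1/ω^2)) * (π/4))) := by
          rw [← hc]
          have hω0 : (ω:ℝ) ≠ 0 := h0.ne'
          have h1' : ω^2 - 1 ≠ 0 := h1.ne'
          field_simp
          ring
      _ ≤ c*π/(1 - 1/ω^2) * gkpS L ω := by
          have hcpos : 0 < c := by positivity
          exact mul_le_mul_of_nonneg_left (gkpS_lb hL hω) (by positivity)
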